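/- Let I ⊆ 𝒞 and c ∈ 𝒞. Then c ∈ I(F(I)) if and only if −c ∈ cone(𝒞 ∪ (−I)), where −I = {−α : α ∈ I}. (The remark following Definition 4.6 in the paper.) -/

import Mathlib

open Finset

/-- `v` lies in `cone(S)`: it is a finite nonnegative real linear combination
of elements of `S`. -/
def InCone {V : Type*} [AddCommGroup V] [Module ℝ V] (S : Set V) (v : V) : Prop :=
  ∃ (n : ℕ) (c : Fin n → ℝ) (g : Fin n → V),
    (∀ t, 0 ≤ c t) ∧ (∀ t, g t ∈ S) ∧ v = ∑ t, c t • g t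

/-- `𝔐 = {v : ⟨c, v⟩ ≥ 0 for all c ∈ 𝒞}`. -/
def Mcone {V : Type*} [NormedAddCommGroup V] [InnerProductSpace ℝ V]
    (𝒞 : Finset V) : Set V :=
  {v | ∀ c ∈ 𝒞, 0 ≤ (inner ℝ c v : ℝ)}

/-- `F(T) = {v ∈ 𝔐 : ⟨t, v⟩ = 0 for all t ∈ T}`. -/
def faceOfSet {V : Type*} [NormedAddCommGroup V] [InnerProductSpace ℝ V]
    (𝒞 : Finset V) (T : Set V) : Set V :=
  {v ∈ Mcone 𝒞 | ∀ t ∈ T, (inner ℝ t v : ℝ) = 0}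

/-- `I(F(T)) = {c' ∈ 𝒞 : ⟨c', v⟩ = 0 for all v ∈ F(T)}`. -/
def IofF {V : Type*} [NormedAddCommGroup V] [InnerProductSpace ℝ V]
    (𝒞 : Finset V) (T : Set V) : Set V :=
  {c | c ∈ 𝒞 ∧ ∀ v ∈ faceOfSet 𝒞 T, (inner ℝ c v : ℝ) = 0}

/-- Conic Carathéodory: a nonnegative combination can be rewritten with a
linearly independent family of generators. -/
theorem cone_caratheodory {V : Type*} [AddCommGroup V] [Module ℝ V] :
    ∀ (n : ℕ) (c : Fin n → ℝ) (g : Fin n → V), (∀ t, 0 ≤ c t) →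
    ∃ (m : ℕ) (c' : Fin m → ℝ) (g' : Fin m → V),
      (∀ t, 0 ≤ c' t) ∧ (∀ t, g' t ∈ Set.range g) ∧ LinearIndependent ℝ g' ∧
      ∑ t, c' t • g' t = ∑ t, c t • g t := by
  intro n
  induction n with
  | zero =>
    intro c g _
    exact ⟨0, c, g, fun t => t.elim0, fun t => t.elim0, linearIndependent_empty_type, rfl⟩
  | succ n ih =>
    intro c g hc
    by_cases hli : LinearIndependent ℝ g
    · exact ⟨n + 1, c, g, hc, fun t => ⟨t, rfl⟩, hli, rfl⟩
    · rw [Fintype.not_linearIndependent_iff] at hli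
      obtain ⟨d, hd0, i, hdi⟩ := hli
      -- wlog there is an index with positive coefficient
      have key : ∀ (d : Fin (n+1) → ℝ), ∑ t, d t • g t = 0 → ∀ i, 0 < d i →
          ∃ (m : ℕ) (c' : Fin m → ℝ) (g' : Fin m → V),
            (∀ t, 0 ≤ c' t) ∧ (∀ t, g' t ∈ Set.range g) ∧ LinearIndependent ℝ g' ∧
            ∑ t, c' t • g' t = ∑ t, c t • g t := by
        intro d hd0 i hdi
        -- choose i0 minimizing c j / d j among j with d j > 0
        have hne : ({j | 0 < d j} : Finset (Fin (n+1))).Nonempty := ⟨i, by simpa using hdi⟩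
        obtain ⟨i0, hi0mem, hi0min⟩ :=
          Finset.exists_min_image ({j | 0 < d j} : Finset (Fin (n+1)))
            (fun j => c j / d j) hne
        have hdi0 : 0 < d i0 := by simpa using hi0mem
        set r := c i0 / d i0 with hr
        have hrpos : 0 ≤ r := div_nonneg (hc i0) hdi0.le
        set c2 : Fin (n+1) → ℝ := fun j => c j - r * d j with hc2
        have hc2nn : ∀ j, 0 ≤ c2 j := by
          intro j
          by_cases hdj : 0 < d j
          · have := hi0min j (by simpa using hdj)
            have : r * d j ≤ c j := by
              rw [hr]
              calc c i0 / d i0 * d j ≤ c j / d j * d j := by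
                    exact mul_le_mul_of_nonneg_right this hdj.le
                _ = c j := div_mul_cancel₀ _ hdj.ne'
            simpa [hc2] using this
          · push_neg at hdj
            simpa [hc2] using
              sub_nonneg.2 ((mul_nonpos_of_nonneg_of_nonpos hrpos hdj).trans (hc j))
        have hc2i0 : c2 i0 = 0 := by
          simp [hc2, hr, div_mul_cancel₀, hdi0.ne']
        have hsum : ∑ t, c2 t • g t = ∑ t, c t • g t := by
          simp only [hc2, sub_smul, mul_smul, Finset.sum_sub_distrib]
          rw [← Finset.smul_sum, hd0, smul_zero, sub_zero]
        -- drop index i0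
        obtain ⟨m, c', g', h1, h2, h3, h4⟩ :=
          ih (fun j => c2 (i0.succAbove j)) (fun j => g (i0.succAbove j))
            (fun j => hc2nn _)
        refine ⟨m, c', g', h1, fun t => ?_, h3, ?_⟩
        · obtain ⟨s, hs⟩ := h2 t
          exact ⟨i0.succAbove s, hs⟩
        · rw [h4, ← hsum, Fin.sum_univ_succAbove (fun t => c2 t • g t) i0, hc2i0, zero_smul,
            zero_add]
      rcases lt_trichotomy (d i) 0 with h | h | h
      · refine key (fun j => -d j) ?_ i (neg_pos.mpr h)
        simp [neg_smul, Finset.sum_neg_distrib, hd0]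
      · exact absurd h hdi
      · exact key d hd0 i h

/-- The cone generated by a linearly independent family is closed. -/
theorem isClosed_cone_of_li {V : Type*} [NormedAddCommGroup V] [InnerProductSpace ℝ V]
    [FiniteDimensional ℝ V] {m : ℕ} (g : Fin m → V) (hg : LinearIndependent ℝ g) :
    IsClosed {v : V | ∃ c : Fin m → ℝ, (∀ t, 0 ≤ c t) ∧ v = ∑ t, c t • g t} := by
  let L : (Fin m → ℝ) →ₗ[ℝ] V := Fintype.linearCombination ℝ g
  have hL : ∀ c : Fin m → ℝ, L c = ∑ t, c t • g t := fun c => by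
    simp [L, Fintype.linearCombination_apply]
  have hker : LinearMap.ker L = ⊥ := by
    rw [LinearMap.ker_eq_bot']
    intro c hcz
    rw [hL] at hcz
    ext t
    exact linearIndependent_iff'.mp hg Finset.univ c (by simpa using hcz) t (Finset.mem_univ t)
  have hemb := LinearMap.isClosedEmbedding_of_injective (f := L) hker
  have horth : IsClosed {c : Fin m → ℝ | ∀ t, 0 ≤ c t} := by
    have : {c : Fin m → ℝ | ∀ t, 0 ≤ c t} = ⋂ t, {c | 0 ≤ c t} := by
      ext; simp [Set.mem_iInter]
    rw [this]
    exact isClosed_iInter fun t => isClosed_le continuous_const (continuous_apply t)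
  have himg : {v : V | ∃ c : Fin m → ℝ, (∀ t, 0 ≤ c t) ∧ v = ∑ t, c t • g t}
      = L '' {c : Fin m → ℝ | ∀ t, 0 ≤ c t} := by
    ext v
    constructor
    · rintro ⟨c, h1, h2⟩; exact ⟨c, h1, by rw [hL]; exact h2.symm⟩
    · rintro ⟨c, h1, h2⟩; exact ⟨c, h1, by rw [← hL c, h2]⟩
  rw [himg]
  exact hemb.isClosedMap _ horth

/-- The cone generated by a finite set is closed. -/
theorem isClosed_inCone {V : Type*} [NormedAddCommGroup V] [InnerProductSpace ℝ V]
    [FiniteDimensional ℝ V] (S : Finset V) :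
    IsClosed {v : V | InCone (S : Set V) v} := by
  classical
  set D := Module.finrank ℝ V with hD
  let ι := Σ m : Fin (D + 1), (Fin (m : ℕ) → {x // x ∈ S})
  let A : ι → Set V := fun p =>
    if LinearIndependent ℝ (fun i => ((p.2 i : V))) then
      {v : V | ∃ c : Fin (p.1 : ℕ) → ℝ, (∀ t, 0 ≤ c t) ∧ v = ∑ t, c t • (p.2 t : V)}
    else ∅
  have hAclosed : ∀ p, IsClosed (A p) := by
    intro p
    by_cases h : LinearIndependent ℝ (fun i => ((p.2 i : V)))
    · simpa [A, h] using isClosed_cone_of_li _ h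
    · simp [A, h]
  have hunion : {v : V | InCone (S : Set V) v} = ⋃ p, A p := by
    ext v
    simp only [Set.mem_iUnion, Set.mem_setOf_eq]
    constructor
    · rintro ⟨n, c, g, hc, hgS, rfl⟩
      obtain ⟨m, c', g', h1, h2, h3, h4⟩ := cone_caratheodory n c g hc
      have hm : m < D + 1 := by
        have := h3.fintype_card_le_finrank
        simpa [hD] using Nat.lt_succ_of_le (by simpa using this)
      have hg'S : ∀ t, g' t ∈ S := by
        intro t
        obtain ⟨s, hs⟩ := h2 t
        rw [← hs]; exact hgS s
      refine ⟨⟨⟨m, hm⟩, fun i => ⟨g' i, hg'S i⟩⟩, ?_⟩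
      have : LinearIndependent ℝ (fun i : Fin m => ((⟨g' i, hg'S i⟩ : {x // x ∈ S}) : V)) := h3
      simp only [A, if_pos this]
      exact ⟨c', h1, h4.symm⟩
    · rintro ⟨p, hp⟩
      by_cases h : LinearIndependent ℝ (fun i => ((p.2 i : V)))
      · simp only [A, if_pos h, Set.mem_setOf_eq] at hp
        obtain ⟨c, hc, rfl⟩ := hp
        exact ⟨(p.1 : ℕ), c, fun t => (p.2 t : V), hc, fun t => (p.2 t).2, rfl⟩
      · simp [A, if_neg h] at hp
  rw [hunion]
  exact isClosed_iUnion_of_finite hAclosed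

theorem inCone_single {V : Type*} [AddCommGroup V] [Module ℝ V] {S : Set V} {s : V}
    (hs : s ∈ S) : InCone S s :=
  ⟨1, fun _ => 1, fun _ => s, fun _ => zero_le_one, fun _ => hs, by simp⟩

theorem inCone_add {V : Type*} [AddCommGroup V] [Module ℝ V] {S : Set V} {v w : V}
    (hv : InCone S v) (hw : InCone S w) : InCone S (v + w) := by
  obtain ⟨n, c, g, hc, hg, rfl⟩ := hv
  obtain ⟨n', c', g', hc', hg', rfl⟩ := hw
  refine ⟨n + n', Fin.append c c', Fin.append g g', ?_, ?_, ?_⟩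
  · intro t
    refine Fin.addCases (fun i => ?_) (fun i => ?_) t
    · simpa using hc i
    · simpa using hc' i
  · intro t
    refine Fin.addCases (fun i => ?_) (fun i => ?_) t
    · simpa using hg i
    · simpa using hg' i
  · rw [Fin.sum_univ_add]
    simp

theorem inCone_smul {V : Type*} [AddCommGroup V] [Module ℝ V] {S : Set V} {v : V}
    {r : ℝ} (hr : 0 ≤ r) (hv : InCone S v) : InCone S (r • v) := by
  obtain ⟨n, c, g, hc, hg, rfl⟩ := hv
  refine ⟨n, fun t => r * c t, g, fun t => mul_nonneg hr (hc t), hg, ?_⟩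
  rw [Finset.smul_sum]
  simp [mul_smul]

/-- **The remark following Definition 4.6.**  For `I ⊆ 𝒞` and `c ∈ 𝒞`,
`c ∈ I(F(I))` if and only if `−c ∈ cone(𝒞 ∪ (−I))`. -/
theorem mem_IofF_iff_neg_inCone
    {V : Type*} [NormedAddCommGroup V] [InnerProductSpace ℝ V]
    [FiniteDimensional ℝ V]
    (𝒞 : Finset V) (I : Set V) (hI : I ⊆ (𝒞 : Set V))
    (c : V) (hc : c ∈ 𝒞) :
    c ∈ IofF 𝒞 I ↔ InCone ((𝒞 : Set V) ∪ (fun α : V => -α) '' I) (-c) := by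
  classical
  set S : Set V := (𝒞 : Set V) ∪ (fun α : V => -α) '' I with hS
  constructor
  · -- hard direction : Farkas
    intro hcI
    by_contra hnc
    -- S as a finset
    have hIfin : I.Finite := (𝒞.finite_toSet).subset hI
    set Sfin : Finset V := 𝒞 ∪ hIfin.toFinset.image (fun α : V => -α) with hSfin
    have hScoe : (Sfin : Set V) = S := by
      simp [hSfin, hS, Finset.coe_union, Finset.coe_image, Set.Finite.coe_toFinset]
    -- the cone on S as a convex cone
    let K : ConvexCone ℝ V :=
      { carrier := {v : V | InCone S v}
        smul_mem' := fun r hr v hv => inCone_smul hr.le hv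
        add_mem' := fun v hv w hw => inCone_add hv hw }
    have hKne : (K : Set V).Nonempty :=
      ⟨0, ⟨0, fun t => t.elim0, fun t => t.elim0, fun t => t.elim0, fun t => t.elim0, by simp⟩⟩
    have hKcl : IsClosed (K : Set V) := by
      have := isClosed_inCone (V := V) Sfin
      rw [hScoe] at this
      exact this
    have hmem : -c ∉ K := hnc
    let C : ProperCone ℝ V :=
      { carrier := {v : V | InCone S v}
        add_mem' := fun hv hw => inCone_add hv hw
        zero_mem' := (⟨0, fun t => t.elim0, fun t => t.elim0, fun t => t.elim0,
          fun t => t.elim0, by simp⟩ : InCone S 0)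
        smul_mem' := fun r v hv => inCone_smul r.2 hv
        isClosed' := hKcl }
    have hmem' : -c ∉ C := hnc
    obtain ⟨y, hy1, hy2⟩ : ∃ y, (∀ x ∈ K, 0 ≤ (inner ℝ x y : ℝ)) ∧ (inner ℝ y (-c) : ℝ) < 0 := by
      obtain ⟨y, hy1, hy2⟩ := ProperCone.hyperplane_separation' C hmem'
      exact ⟨y, fun x hx => hy1 x hx, by rw [real_inner_comm]; exact hy2⟩
    -- y lies in the face F(I)
    have hyM : y ∈ Mcone 𝒞 := by
      intro c' hc'
      have : InCone S c' := inCone_single (Or.inl hc')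
      simpa [real_inner_comm] using hy1 c' this
    have hyF : y ∈ faceOfSet 𝒞 I := by
      refine ⟨hyM, fun t ht => ?_⟩
      have h1 : 0 ≤ (inner ℝ t y : ℝ) := hyM t (hI ht)
      have h2 : InCone S (-t) := inCone_single (Or.inr ⟨t, ht, rfl⟩)
      have h3 : 0 ≤ (inner ℝ (-t) y : ℝ) := by simpa [real_inner_comm] using hy1 (-t) h2
      rw [inner_neg_left] at h3
      linarith
    have := hcI.2 y hyF
    rw [inner_neg_right, real_inner_comm] at hy2
    linarith
  · -- easy direction
    rintro ⟨n, co, g, hco, hg, hsum⟩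
    refine ⟨hc, fun v hv => ?_⟩
    obtain ⟨hvM, hvF⟩ := hv
    have hterm : ∀ t, 0 ≤ (inner ℝ (g t) v : ℝ) := by
      intro t
      rcases hg t with h | ⟨α, hα, h⟩
      · exact hvM _ h
      · have : (inner ℝ (g t) v : ℝ) = -(inner ℝ α v : ℝ) := by
          rw [← h]; simp [inner_neg_left]
        rw [this, hvF α hα, neg_zero]
    have hle : (inner ℝ c v : ℝ) ≤ 0 := by
      have : (inner ℝ (-c) v : ℝ) = ∑ t, co t * (inner ℝ (g t) v : ℝ) := by
        rw [hsum, sum_inner]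
        simp [real_inner_smul_left]
      rw [inner_neg_left] at this
      have hnn : 0 ≤ ∑ t, co t * (inner ℝ (g t) v : ℝ) :=
        Finset.sum_nonneg fun t _ => mul_nonneg (hco t) (hterm t)
      linarith
    exact le_antisymm hle (hvM c hc)
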